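/- Let h₁, h₂ ∈ ℝ with 0 < 2h₁ ≤ h₂, s,t ≥ 1/2 (with h₂ < 1/2 if s = 1/2 or t = 1/2), M_{s,t}(x+iξ) = |x|^{1/t}+|ξ|^{1/s}, and let F ∈ L¹_loc(ℂ^d) satisfy ∫ |F(z)| e^{-|z|²+N|z|} dλ(z) < ∞ for all N. Define Π_A F(z) = π^{-d} ∫_{ℂ^d} F(w) e^{⟨z,w̄⟩} e^{-|w|²} dλ(w). Then ∫ |Π_A F(z)| e^{-(|z|²/2 + h₂ M_{s,t}(z))} dλ(z) ≤ C ∫ |F(z)| e^{-(|z|²/2 + h₁ M_{s,t}(z))} dλ(z) for a constant C depending only on d, s, t, h₁, h₂. -/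

import Mathlib

open MeasureTheory
open scoped NNReal ENNReal RealInnerProductSpace

private lemma aux_two_mul_rpow {a x y : ℝ} (ha0 : 0 < a) (ha2 : a ≤ 2) (hx : 0 ≤ x) (hy : 0 ≤ y) :
    (x + y) ^ a ≤ 2 * (x ^ a + y ^ a) := by
  rcases le_total a 1 with h1 | h1
  · have h := NNReal.rpow_add_le_add_rpow x.toNNReal y.toNNReal ha0.le h1
    have h' := NNReal.coe_le_coe.mpr h
    push_cast at h'
    rw [Real.coe_toNNReal _ hx, Real.coe_toNNReal _ hy] at h'
    nlinarith [Real.rpow_nonneg hx a, Real.rpow_nonneg hy a]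
  · have h := NNReal.rpow_add_le_mul_rpow_add_rpow x.toNNReal y.toNNReal h1
    have h2 : ((2:ℝ)) ^ (a - 1) ≤ 2 := by
      have : (2:ℝ) ^ (a-1) ≤ (2:ℝ) ^ (1:ℝ) :=
        Real.rpow_le_rpow_of_exponent_le (by norm_num) (by linarith)
      simpa using this
    have h' := NNReal.coe_le_coe.mpr h
    push_cast at h'
    rw [Real.coe_toNNReal _ hx, Real.coe_toNNReal _ hy] at h'
    nlinarith [Real.rpow_nonneg hx a, Real.rpow_nonneg hy a,
      Real.rpow_nonneg (by linarith : (0:ℝ) ≤ x + y) a]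

private lemma aux_triangle_rpow {a c₁ c₂ x y u : ℝ} (ha0 : 0 < a) (ha2 : a ≤ 2)
    (hc : 2 * c₁ ≤ c₂) (hc1 : 0 ≤ c₁) (hx : 0 ≤ x) (hy : 0 ≤ y) (hu : 0 ≤ u)
    (hxyu : x ≤ y + u) : c₁ * x ^ a ≤ c₂ * y ^ a + c₂ * u ^ a := by
  have h1 : x ^ a ≤ (y + u) ^ a := Real.rpow_le_rpow hx hxyu ha0.le
  have h2 := aux_two_mul_rpow ha0 ha2 hy hu
  nlinarith [Real.rpow_nonneg hy a, Real.rpow_nonneg hu a]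

private lemma aux_coercive {a c : ℝ} (ha0 : 0 < a) (ha2 : a ≤ 2) (hc : 0 < c)
    (hc2 : a = 2 → c < 1/2) :
    ∃ ε : ℝ, 0 < ε ∧ ∃ K : ℝ, 0 ≤ K ∧ ∀ r : ℝ, 0 ≤ r → c * r ^ a ≤ (1/2 - ε) * r ^ 2 + K := by
  rcases eq_or_lt_of_le ha2 with h2 | h2
  · refine ⟨(1/2 - c)/2, by have := hc2 h2; linarith, 0, le_refl _, fun r hr => ?_⟩
    subst h2
    rw [Real.rpow_two]
    have := hc2 rfl
    nlinarith [sq_nonneg r]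
  · refine ⟨1/4, by norm_num, c * (max 1 ((4*c) ^ (1/(2-a)))) ^ a, by positivity, fun r hr => ?_⟩
    set R := max 1 ((4*c) ^ (1/(2-a))) with hR
    have hR1 : (1:ℝ) ≤ R := le_max_left _ _
    rcases le_total r R with hrR | hrR
    · have : r ^ a ≤ R ^ a := Real.rpow_le_rpow hr hrR ha0.le
      nlinarith [sq_nonneg r]
    · have hr1 : (1:ℝ) ≤ r := le_trans hR1 hrR
      have hr0 : 0 < r := by linarith
      have hkey : 4 * c ≤ r ^ (2 - a) := by
        have h1 : (4*c) ^ (1/(2-a)) ≤ r := le_trans (le_max_right _ _) hrR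
        have h3 : ((4*c) ^ (1/(2-a))) ^ (2-a) ≤ r ^ (2-a) :=
          Real.rpow_le_rpow (Real.rpow_nonneg (by linarith) _) h1 (by linarith)
        rw [← Real.rpow_mul (by linarith : (0:ℝ) ≤ 4*c),
          one_div_mul_cancel (by linarith : (2:ℝ) - a ≠ 0), Real.rpow_one] at h3
        exact h3
      have hsplit : r ^ (2:ℕ) = r ^ a * r ^ (2 - a) := by
        rw [← Real.rpow_natCast r 2, ← Real.rpow_add hr0]
        norm_num
      have hra : 0 ≤ r ^ a := Real.rpow_nonneg hr a
      have hRa : 0 ≤ c * R ^ a := by positivity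
      nlinarith

private lemma aux_gauss_c {ε : ℝ} (hε : 0 < ε) :
    Integrable (fun v : ℂ => Real.exp (-ε * ‖v‖ ^ 2)) := by
  have h : Integrable (fun v : ℂ =>
      Complex.exp (-(ε:ℂ) * (‖v‖:ℂ)^2 + (0:ℂ) * (⟪(0:ℂ), v⟫ : ℝ))) :=
    GaussianFourier.integrable_cexp_neg_mul_sq_norm_add (by simpa using hε) 0 0
  refine h.norm.congr (Filter.Eventually.of_forall fun v => ?_)
  simp [Complex.norm_exp, Complex.add_re, Complex.mul_re,
    ← Complex.ofReal_pow]

private lemma aux_gauss (d : ℕ) {ε : ℝ} (hε : 0 < ε) :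
    Integrable (fun u : Fin d → ℂ => Real.exp (-ε * ∑ i, ‖u i‖ ^ 2)) := by
  have h := Integrable.fintype_prod (f := fun _ : Fin d => fun v : ℂ =>
    Real.exp (-ε * ‖v‖ ^ 2)) (fun _ => aux_gauss_c hε)
  refine h.congr (Filter.Eventually.of_forall fun u => ?_)
  simp only
  rw [← Real.exp_sum, Finset.mul_sum]

private lemma aux_sqrt_triangle (d : ℕ) (f g : Fin d → ℝ) :
    Real.sqrt (∑ i, (f i + g i) ^ 2) ≤ Real.sqrt (∑ i, f i ^ 2) + Real.sqrt (∑ i, g i ^ 2) := by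
  have h := norm_add_le ((WithLp.equiv 2 (Fin d → ℝ)).symm f) ((WithLp.equiv 2 (Fin d → ℝ)).symm g)
  simpa [EuclideanSpace.norm_eq, Real.norm_eq_abs, sq_abs] using h

private lemma aux_sqrt_tri' (d : ℕ) (x y : Fin d → ℝ) :
    Real.sqrt (∑ i, x i ^ 2) ≤ Real.sqrt (∑ i, y i ^ 2) + Real.sqrt (∑ i, (y i - x i) ^ 2) := by
  have h := aux_sqrt_triangle d y (fun i => x i - y i)
  have e1 : (∑ i, (y i + (x i - y i)) ^ 2) = ∑ i, x i ^ 2 :=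
    Finset.sum_congr rfl (fun i _ => by ring)
  have e2 : (∑ i, (x i - y i) ^ 2) = ∑ i, (y i - x i) ^ 2 :=
    Finset.sum_congr rfl (fun i _ => by ring)
  rw [e1, e2] at h
  exact h

private lemma aux_quad (d : ℕ) (z w : Fin d → ℂ) :
    (∑ i, ‖z i - w i‖ ^ 2) + 2 * (∑ i, z i * (starRingEnd ℂ) (w i)).re
      = (∑ i, ‖z i‖ ^ 2) + ∑ i, ‖w i‖ ^ 2 := by
  rw [Complex.re_sum, Finset.mul_sum, ← Finset.sum_add_distrib, ← Finset.sum_add_distrib]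
  apply Finset.sum_congr rfl
  intro i _
  simp only [Complex.sq_norm, Complex.normSq_apply, Complex.sub_re, Complex.sub_im,
    Complex.mul_re, Complex.conj_re, Complex.conj_im]
  ring

private lemma aux_key (d : ℕ) (s t h₁ h₂ : ℝ) (hs : 1/2 ≤ s) (ht : 1/2 ≤ t) (hh₁ : 0 < h₁)
    (hh₁₂ : 2*h₁ ≤ h₂) (z w : Fin d → ℂ) :
    (∑ i, z i * (starRingEnd ℂ) (w i)).re - (∑ i, ‖w i‖ ^ 2)
      - (∑ i, ‖z i‖ ^ 2)/2
      - h₂ * ((Real.sqrt (∑ i, (z i).re ^ 2)) ^ (1/t) + (Real.sqrt (∑ i, (z i).im ^ 2)) ^ (1/s))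
    ≤ (-((∑ i, ‖w i‖ ^ 2)/2
        + h₁ * ((Real.sqrt (∑ i, (w i).re ^ 2)) ^ (1/t)
          + (Real.sqrt (∑ i, (w i).im ^ 2)) ^ (1/s))))
      + (-(∑ i, ‖z i - w i‖ ^ 2)/2
        + h₂ * ((Real.sqrt (∑ i, (z i - w i).re ^ 2)) ^ (1/t)
          + (Real.sqrt (∑ i, (z i - w i).im ^ 2)) ^ (1/s))) := by
  have ht0 : 0 < t := by linarith
  have hs0 : 0 < s := by linarith
  have hta : 0 < 1/t := by positivity
  have hsa : 0 < 1/s := by positivity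
  have hta2 : 1/t ≤ 2 := by rw [div_le_iff₀ ht0]; linarith
  have hsa2 : 1/s ≤ 2 := by rw [div_le_iff₀ hs0]; linarith
  have quad := aux_quad d z w
  have trre := aux_sqrt_tri' d (fun i => (w i).re) (fun i => (z i).re)
  have trim := aux_sqrt_tri' d (fun i => (w i).im) (fun i => (z i).im)
  simp only [← Complex.sub_re, ← Complex.sub_im] at trre trim
  have hre := aux_triangle_rpow hta hta2 hh₁₂ hh₁.le (Real.sqrt_nonneg _) (Real.sqrt_nonneg _)
    (Real.sqrt_nonneg _) trre
  have him := aux_triangle_rpow hsa hsa2 hh₁₂ hh₁.le (Real.sqrt_nonneg _) (Real.sqrt_nonneg _)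
    (Real.sqrt_nonneg _) trim
  linarith

theorem stmt_16 (d : ℕ) (s t h₁ h₂ : ℝ) (hs : 1 / 2 ≤ s) (ht : 1 / 2 ≤ t)
    (hh₁ : 0 < h₁) (hh₁₂ : 2 * h₁ ≤ h₂)
    (h2s : s = 1 / 2 → h₂ < 1 / 2) (h2t : t = 1 / 2 → h₂ < 1 / 2) :
    ∃ C > 0, ∀ F : (Fin d → ℂ) → ℂ,
      (∀ N : ℕ, Integrable (fun z : Fin d → ℂ =>
        ‖F z‖ *
          Real.exp (-(∑ i, ‖z i‖ ^ 2) +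
            N * Real.sqrt (∑ i, ‖z i‖ ^ 2)))) →
      (∫⁻ z : Fin d → ℂ,
          ENNReal.ofReal
            (‖(Real.pi : ℂ)⁻¹ ^ d *
                ∫ w : Fin d → ℂ,
                  F w * Complex.exp (∑ i, z i * (starRingEnd ℂ) (w i)) *
                    ((Real.exp (-(∑ i, ‖w i‖ ^ 2)) : ℝ) : ℂ)‖ *
              Real.exp (-((∑ i, ‖z i‖ ^ 2) / 2 +
                h₂ * ((Real.sqrt (∑ i, (z i).re ^ 2)) ^ (1 / t) +
                  (Real.sqrt (∑ i, (z i).im ^ 2)) ^ (1 / s))))))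
        ≤ ENNReal.ofReal C *
            ∫⁻ z : Fin d → ℂ,
              ENNReal.ofReal
                (‖F z‖ *
                  Real.exp (-((∑ i, ‖z i‖ ^ 2) / 2 +
                    h₁ * ((Real.sqrt (∑ i, (z i).re ^ 2)) ^ (1 / t) +
                      (Real.sqrt (∑ i, (z i).im ^ 2)) ^ (1 / s))))) := by
  have hs0 : 0 < s := by linarith
  have ht0 : 0 < t := by linarith
  have hh₂ : 0 < h₂ := by linarith
  have hta : 0 < 1/t := by positivity
  have hsa : 0 < 1/s := by positivity
  have hta2 : 1/t ≤ 2 := by rw [div_le_iff₀ ht0]; linarith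
  have hsa2 : 1/s ≤ 2 := by rw [div_le_iff₀ hs0]; linarith
  obtain ⟨ε₁, hε₁, K₁, hK₁0, hK₁⟩ := aux_coercive hta hta2 hh₂
    (fun h => h2t (by have h' := ht0.ne'; field_simp at h; linarith))
  obtain ⟨ε₂, hε₂, K₂, hK₂0, hK₂⟩ := aux_coercive hsa hsa2 hh₂
    (fun h => h2s (by have h' := hs0.ne'; field_simp at h; linarith))
  set ε := min ε₁ ε₂ with hεdef
  have hε : 0 < ε := lt_min hε₁ hε₂
  have hHbound : ∀ u : Fin d → ℂ,
      -(∑ i, ‖u i‖ ^ 2)/2 +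
        h₂ * ((Real.sqrt (∑ i, (u i).re ^ 2)) ^ (1/t) + (Real.sqrt (∑ i, (u i).im ^ 2)) ^ (1/s))
      ≤ K₁ + K₂ + -ε * (∑ i, ‖u i‖ ^ 2) := by
    intro u
    have hq : (∑ i, ‖u i‖ ^ 2) = (∑ i, (u i).re ^ 2) + (∑ i, (u i).im ^ 2) := by
      rw [← Finset.sum_add_distrib]
      exact Finset.sum_congr rfl fun i _ => by rw [Complex.sq_norm, Complex.normSq_apply]; ring
    have hr1 : Real.sqrt (∑ i, (u i).re ^ 2) ^ 2 = ∑ i, (u i).re ^ 2 :=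
      Real.sq_sqrt (by positivity)
    have hr2 : Real.sqrt (∑ i, (u i).im ^ 2) ^ 2 = ∑ i, (u i).im ^ 2 :=
      Real.sq_sqrt (by positivity)
    have b₁ := hK₁ _ (Real.sqrt_nonneg (∑ i, (u i).re ^ 2))
    have b₂ := hK₂ _ (Real.sqrt_nonneg (∑ i, (u i).im ^ 2))
    rw [hr1] at b₁
    rw [hr2] at b₂
    have he1 : ε ≤ ε₁ := min_le_left _ _
    have he2 : ε ≤ ε₂ := min_le_right _ _
    have hA : (0:ℝ) ≤ ∑ i, (u i).re ^ 2 := by positivity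
    have hB : (0:ℝ) ≤ ∑ i, (u i).im ^ 2 := by positivity
    rw [hq]
    nlinarith [mul_le_mul_of_nonneg_right he1 hA, mul_le_mul_of_nonneg_right he2 hB]
  set Hf : (Fin d → ℂ) → ℝ≥0∞ := fun u => ENNReal.ofReal (Real.exp
    (-(∑ i, ‖u i‖ ^ 2)/2 +
      h₂ * ((Real.sqrt (∑ i, (u i).re ^ 2)) ^ (1/t)
        + (Real.sqrt (∑ i, (u i).im ^ 2)) ^ (1/s)))) with hHfdef
  set C₀ := ∫⁻ u : Fin d → ℂ, Hf u with hC₀def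
  have hC₀ : C₀ < ⊤ := by
    rw [hC₀def]
    refine lt_of_le_of_lt (lintegral_mono fun u => ?_)
      (((aux_gauss d hε).const_mul (Real.exp (K₁ + K₂))).lintegral_lt_top)
    rw [hHfdef]
    simp only
    refine ENNReal.ofReal_le_ofReal ?_
    rw [← Real.exp_add]
    exact Real.exp_le_exp.2 (hHbound u)
  have hQcont : Continuous fun z : Fin d → ℂ => ∑ i, ‖z i‖ ^ 2 :=
    continuous_finset_sum _ fun i _ => (continuous_norm.comp (continuous_apply i)).pow 2
  have hMcont : Continuous fun z : Fin d → ℂ =>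
      (Real.sqrt (∑ i, (z i).re ^ 2)) ^ (1/t) + (Real.sqrt (∑ i, (z i).im ^ 2)) ^ (1/s) := by
    apply Continuous.add
    · exact (Real.continuous_sqrt.comp (continuous_finset_sum _ fun i _ =>
        ((Complex.continuous_re.comp (continuous_apply i)).pow 2))).rpow_const
        (fun x => Or.inr hta.le)
    · exact (Real.continuous_sqrt.comp (continuous_finset_sum _ fun i _ =>
        ((Complex.continuous_im.comp (continuous_apply i)).pow 2))).rpow_const
        (fun x => Or.inr hsa.le)
  have hHfmeas : Measurable Hf := by
    rw [hHfdef]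
    exact ENNReal.measurable_ofReal.comp
      (Real.continuous_exp.comp ((hQcont.neg.div_const 2).add (continuous_const.mul hMcont))).measurable
  set C : ℝ := Real.pi⁻¹ ^ d * C₀.toReal + 1 with hCdef
  have hCpos : 0 < C := by
    have h1 : (0:ℝ) ≤ Real.pi⁻¹ ^ d * C₀.toReal := by positivity
    rw [hCdef]; linarith
  have hfin : ENNReal.ofReal (Real.pi⁻¹ ^ d) * C₀ ≤ ENNReal.ofReal C := by
    rw [← ENNReal.ofReal_toReal hC₀.ne, ← ENNReal.ofReal_mul (by positivity)]
    refine ENNReal.ofReal_le_ofReal ?_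
    rw [hCdef]; linarith
  refine ⟨C, hCpos, fun F hF => ?_⟩
  set g : (Fin d → ℂ) → ℝ≥0∞ := fun w => ENNReal.ofReal
    (‖F w‖ * Real.exp (-((∑ i, ‖w i‖ ^ 2) / 2 +
      h₁ * ((Real.sqrt (∑ i, (w i).re ^ 2)) ^ (1 / t) +
        (Real.sqrt (∑ i, (w i).im ^ 2)) ^ (1 / s))))) with hgdef
  -- measurability of |F|
  have habs : AEMeasurable (fun w : Fin d → ℂ => ‖F w‖) volume := by
    have h0 := (hF 0).aestronglyMeasurable.aemeasurable
    have hcont : Continuous fun z : Fin d → ℂ =>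
        Real.exp ((∑ i, ‖z i‖ ^ 2) -
          (0:ℕ) * Real.sqrt (∑ i, ‖z i‖ ^ 2)) :=
      Real.continuous_exp.comp ((hQcont).sub
        (continuous_const.mul (Real.continuous_sqrt.comp hQcont)))
    have h1 := h0.mul hcont.measurable.aemeasurable
    have heq : (fun z : Fin d → ℂ =>
        (‖F z‖ * Real.exp (-(∑ i, ‖z i‖ ^ 2) +
          (0:ℕ) * Real.sqrt (∑ i, ‖z i‖ ^ 2))) *
        Real.exp ((∑ i, ‖z i‖ ^ 2) -
          (0:ℕ) * Real.sqrt (∑ i, ‖z i‖ ^ 2)))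
        = fun z : Fin d → ℂ => ‖F z‖ := by
      funext z
      rw [mul_assoc, ← Real.exp_add]
      norm_num
    rw [← heq]
    exact h1
  have hgmeas : AEMeasurable g volume := by
    rw [hgdef]
    exact ENNReal.measurable_ofReal.comp_aemeasurable (habs.mul
      ((Real.continuous_exp.comp
        (((hQcont.div_const 2).add (continuous_const.mul hMcont)).neg)).measurable.aemeasurable))
  have hker : AEMeasurable (Function.uncurry fun z w : Fin d → ℂ => g w * Hf (z - w))
      ((volume : Measure (Fin d → ℂ)).prod (volume : Measure (Fin d → ℂ))) := by
    have h1 : AEMeasurable (fun p : (Fin d → ℂ) × (Fin d → ℂ) => g p.2) (volume.prod volume) :=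
      hgmeas.comp_quasiMeasurePreserving MeasureTheory.Measure.quasiMeasurePreserving_snd
    have h2 : Measurable (fun p : (Fin d → ℂ) × (Fin d → ℂ) => Hf (p.1 - p.2)) :=
      hHfmeas.comp (measurable_fst.sub measurable_snd)
    exact h1.mul h2.aemeasurable
  -- key pointwise bound
  have key2 : ∀ z : Fin d → ℂ,
      ENNReal.ofReal
        (‖(Real.pi : ℂ)⁻¹ ^ d *
            ∫ w : Fin d → ℂ,
              F w * Complex.exp (∑ i, z i * (starRingEnd ℂ) (w i)) *
                ((Real.exp (-(∑ i, ‖w i‖ ^ 2)) : ℝ) : ℂ)‖ *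
          Real.exp (-((∑ i, ‖z i‖ ^ 2) / 2 +
            h₂ * ((Real.sqrt (∑ i, (z i).re ^ 2)) ^ (1 / t) +
              (Real.sqrt (∑ i, (z i).im ^ 2)) ^ (1 / s)))))
      ≤ ENNReal.ofReal (Real.pi⁻¹ ^ d) * ∫⁻ w, g w * Hf (z - w) := by
    intro z
    set I := ∫ w : Fin d → ℂ,
        F w * Complex.exp (∑ i, z i * (starRingEnd ℂ) (w i)) *
          ((Real.exp (-(∑ i, ‖w i‖ ^ 2)) : ℝ) : ℂ) with hIdef
    have habsmul : ‖(Real.pi : ℂ)⁻¹ ^ d * I‖ = Real.pi⁻¹ ^ d * ‖I‖ := by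
      rw [norm_mul, norm_pow, norm_inv, Complex.norm_real, Real.norm_eq_abs, abs_of_pos Real.pi_pos]
    rw [habsmul, mul_assoc, ENNReal.ofReal_mul (by positivity : (0:ℝ) ≤ Real.pi⁻¹ ^ d),
      ENNReal.ofReal_mul (norm_nonneg I)]
    refine mul_le_mul_right ?_ _
    have hIle : ENNReal.ofReal (‖I‖) ≤
        ∫⁻ w, ENNReal.ofReal (‖F w‖ *
          Real.exp ((∑ i, z i * (starRingEnd ℂ) (w i)).re +
            -(∑ i, ‖w i‖ ^ 2))) := by
      rw [ofReal_norm_eq_enorm, hIdef]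
      refine le_trans (enorm_integral_le_lintegral_enorm _)
        (le_of_eq (lintegral_congr fun w => ?_))
      rw [← ofReal_norm_eq_enorm]
      congr 1
      rw [norm_mul, norm_mul, Complex.norm_exp, Complex.norm_real, Real.norm_eq_abs, Real.abs_exp, mul_assoc, ← Real.exp_add]
    calc ENNReal.ofReal (‖I‖) *
          ENNReal.ofReal (Real.exp (-((∑ i, ‖z i‖ ^ 2) / 2 +
            h₂ * ((Real.sqrt (∑ i, (z i).re ^ 2)) ^ (1 / t) +
              (Real.sqrt (∑ i, (z i).im ^ 2)) ^ (1 / s)))))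
        ≤ (∫⁻ w, ENNReal.ofReal (‖F w‖ *
            Real.exp ((∑ i, z i * (starRingEnd ℂ) (w i)).re +
              -(∑ i, ‖w i‖ ^ 2)))) *
          ENNReal.ofReal (Real.exp (-((∑ i, ‖z i‖ ^ 2) / 2 +
            h₂ * ((Real.sqrt (∑ i, (z i).re ^ 2)) ^ (1 / t) +
              (Real.sqrt (∑ i, (z i).im ^ 2)) ^ (1 / s))))) := mul_le_mul_left hIle _
      _ = ∫⁻ w, ENNReal.ofReal (‖F w‖ *
            Real.exp ((∑ i, z i * (starRingEnd ℂ) (w i)).re +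
              -(∑ i, ‖w i‖ ^ 2))) *
          ENNReal.ofReal (Real.exp (-((∑ i, ‖z i‖ ^ 2) / 2 +
            h₂ * ((Real.sqrt (∑ i, (z i).re ^ 2)) ^ (1 / t) +
              (Real.sqrt (∑ i, (z i).im ^ 2)) ^ (1 / s))))) :=
        (lintegral_mul_const' _ _ ENNReal.ofReal_ne_top).symm
      _ ≤ ∫⁻ w, g w * Hf (z - w) := by
        refine lintegral_mono fun w => ?_
        rw [hgdef, hHfdef]
        simp only [Pi.sub_apply]
        rw [← ENNReal.ofReal_mul (mul_nonneg (norm_nonneg _) (Real.exp_pos _).le),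
          ← ENNReal.ofReal_mul (mul_nonneg (norm_nonneg _) (Real.exp_pos _).le)]
        refine ENNReal.ofReal_le_ofReal ?_
        rw [mul_assoc, mul_assoc, ← Real.exp_add, ← Real.exp_add]
        refine mul_le_mul_of_nonneg_left (Real.exp_le_exp.2 ?_) (norm_nonneg _)
        have hk := aux_key d s t h₁ h₂ hs ht hh₁ hh₁₂ z w
        linarith
  refine le_trans (lintegral_mono key2) ?_
  rw [lintegral_const_mul' _ _ ENNReal.ofReal_ne_top, lintegral_lintegral_swap hker]
  have hinner : ∀ w : Fin d → ℂ, (∫⁻ z, g w * Hf (z - w)) = g w * C₀ := by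
    intro w
    have hgne : g w ≠ ⊤ := by rw [hgdef]; exact ENNReal.ofReal_ne_top
    rw [lintegral_const_mul' _ _ hgne, lintegral_sub_right_eq_self Hf w, ← hC₀def]
  rw [lintegral_congr hinner, lintegral_mul_const' C₀ g hC₀.ne]
  calc ENNReal.ofReal (Real.pi⁻¹ ^ d) * ((∫⁻ w, g w) * C₀)
      = (ENNReal.ofReal (Real.pi⁻¹ ^ d) * C₀) * ∫⁻ w, g w := by ring
    _ ≤ ENNReal.ofReal C * ∫⁻ w, g w := mul_le_mul_left hfin _
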